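/- arXiv:1512.00976 — 2 statements merged into one kernel-verified Lean document; each statement's English description precedes it below -/
import Mathlib

section
/- In a regular vine V = (T₁,…,T_{d−1}) on d elements, for every edge e = {a,b} of tree T_k (k ≥ 1), the conditioned sets i(e) = A_a \ D(e) and j(e) = A_b \ D(e) are singletons, and the conditioning set D(e) = A_a ∩ A_b has cardinality k−1; consequently the complete union A_e has cardinality k+1. -/
/-- Nodes of the trees of a regular vine on `d` elements: nodes of `T₁` are
`{1,…,d}` (here `Fin d`), and nodes of `T_{k+1}` are (unordered pairs forming)
edges of `T_k`. -/
@[reducible] def VineNode (d : ℕ) : ℕ → Type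
  | 0 => Fin d
  | k + 1 => Sym2 (VineNode d k)

/-- The simple graph on the vertex subset `S` whose edges are the unordered
pairs in `E`. -/
def graphOn {α : Type*} (E : Set (Sym2 α)) (S : Set α) : SimpleGraph S where
  Adj x y := x ≠ y ∧ s((x : α), (y : α)) ∈ E
  symm := by
    constructor
    intro x y h
    exact ⟨h.1.symm, by rw [Sym2.eq_swap]; exact h.2⟩
  loopless := by constructor; intro x h; exact h.1 rfl

/-- `E` is the edge set of a tree on the node set `S`. -/
def IsTreeOn {α : Type*} (S : Set α) (E : Set (Sym2 α)) : Prop :=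
  (graphOn E S).IsTree ∧ ∀ e ∈ E, ¬ e.IsDiag ∧ ∀ x ∈ e, x ∈ S

/-- Two unordered pairs share exactly one element (the proximity condition). -/
def SharesExactlyOne {α : Type*} (a b : Sym2 α) : Prop :=
  ∃ x y z : α, x ≠ y ∧ x ≠ z ∧ y ≠ z ∧ a = s(x, z) ∧ b = s(y, z)

/-- A regular vine `V = (T₁,…,T_{d−1})` on `d` elements (Definition 2.1):
`T₁` is a tree on `{1,…,d}`; for each `k`, `T_{k+1}` is a tree whose node set is
the edge set of `T_k`; and the proximity condition holds. Here `edges k` is the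
edge set of tree `T_{k+1}` (0-indexed levels), and the trees `T_k` for `k > d−1`
are empty. -/
structure RegularVine (d : ℕ) where
  edges : ∀ k : ℕ, Set (Sym2 (VineNode d k))
  tree_zero : IsTreeOn (Set.univ : Set (VineNode d 0)) (edges 0)
  tree_succ : ∀ k : ℕ, k + 2 ≤ d - 1 →
    IsTreeOn (edges k : Set (VineNode d (k + 1))) (edges (k + 1))
  prox : ∀ k : ℕ, ∀ e ∈ edges (k + 1), ∀ a b : VineNode d (k + 1),
    e = s(a, b) → a ≠ b → SharesExactlyOne (a : Sym2 (VineNode d k)) b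
  edges_top : ∀ k : ℕ, d - 1 ≤ k → edges k = ∅

/-- The complete union `A_e ⊆ {1,…,d}` of a node/edge of a regular vine. -/
def completeUnion (d : ℕ) : ∀ k : ℕ, VineNode d k → Set (Fin d)
  | 0, v => {v}
  | k + 1, e => {i | ∃ a, a ∈ (e : Sym2 (VineNode d k)) ∧ i ∈ completeUnion d k a}

open SimpleGraph Set

/-- The vertex support of a set of unordered pairs. -/
def esupp {α : Type*} (F : Set (Sym2 α)) : Set α := {x | ∃ e ∈ F, x ∈ e}

lemma mem_esupp {α : Type*} {F : Set (Sym2 α)} {e : Sym2 α} {x : α}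
    (he : e ∈ F) (hx : x ∈ e) : x ∈ esupp F := ⟨e, he, hx⟩

lemma esupp_finite {α : Type*} {F : Set (Sym2 α)} (h : F.Finite) : (esupp F).Finite := by
  have : esupp F = ⋃ e ∈ F, {x | x ∈ e} := by ext x; simp [esupp]
  rw [this]
  refine h.biUnion fun e _ => ?_
  induction e using Sym2.ind with
  | _ p q =>
    have : {x | x ∈ s(p, q)} = {p, q} := by ext x; simp [Sym2.mem_iff]
    rw [this]; exact (Set.finite_singleton q).insert p

lemma esupp_nonempty {α : Type*} {F : Set (Sym2 α)} (h : F.Nonempty) : (esupp F).Nonempty := by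
  obtain ⟨e, he⟩ := h
  induction e using Sym2.ind with
  | _ p q => exact ⟨p, mem_esupp he (by simp)⟩

/-- Reachability within a pair: both elements of a nondiagonal pair belonging to `W`
are reachable from each other in `fromEdgeSet W`. -/
lemma reach_within {α : Type*} {W : Set (Sym2 α)} {u : Sym2 α} (hnd : ¬ u.IsDiag)
    (hu : u ∈ W) {p q : α} (hp : p ∈ u) (hq : q ∈ u) :
    (SimpleGraph.fromEdgeSet W).Reachable p q := by
  induction u using Sym2.ind with
  | _ x z =>
    rw [Sym2.isDiag_iff_proj_eq] at hnd
    rcases eq_or_ne p q with rfl | hpq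
    · exact Reachable.refl p
    · have hedge : s(p, q) = s(x, z) := by
        rw [Sym2.mem_iff] at hp hq
        rcases hp with rfl | rfl <;> rcases hq with rfl | rfl <;>
          first | rfl | (exact absurd rfl hpq) | (rw [Sym2.eq_swap])
      exact Adj.reachable (by rw [fromEdgeSet_adj]; exact ⟨hedge ▸ hu, hpq⟩)

/-- A connected set of `F` of edges of a forest has `F.ncard + 1` vertices. -/
lemma count_lemma {α : Type*} {S : Set α} {E : Set (Sym2 α)} (hT : IsTreeOn S E)
    {F : Set (Sym2 α)} (hFE : F ⊆ E) (hfin : F.Finite) (hne : F.Nonempty)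
    (hconn : ∀ x ∈ esupp F, ∀ y ∈ esupp F, (SimpleGraph.fromEdgeSet F).Reachable x y) :
    (esupp F).ncard = F.ncard + 1 := by
  classical
  have hsub : esupp F ⊆ S := by
    rintro x ⟨e, he, hx⟩
    exact (hT.2 e (hFE he)).2 x hx
  set K : SimpleGraph α := SimpleGraph.fromEdgeSet F with hK
  set S' : Set α := esupp F with hS'
  set H : SimpleGraph S' := K.induce S' with hH
  haveI : Finite ↥S' := (esupp_finite hfin).to_subtype
  haveI : Fintype ↥S' := Fintype.ofFinite _
  -- the hom into the tree
  have hadj : ∀ {u v : ↥S'}, H.Adj u v → (u : α) ≠ v ∧ s((u : α), (v : α)) ∈ F := by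
    intro u v huv
    exact ⟨(SimpleGraph.comap_adj.mp huv).ne, ((fromEdgeSet_adj _).mp huv).1⟩
  let φ : H →g graphOn E S := by
    refine ⟨fun x => ⟨(x : α), hsub x.2⟩, ?_⟩
    intro u v huv
    refine ⟨fun h => (hadj huv).1 ?_, hFE (hadj huv).2⟩
    have := congrArg Subtype.val h
    exact this
  have hφinj : Function.Injective φ := by
    intro u v h
    apply Subtype.ext
    have := congrArg Subtype.val h
    exact this
  have hHac : H.IsAcyclic := by
    intro v c hc
    exact hT.1.IsAcyclic (c.map φ) ((Walk.map_isCycle_iff_of_injective hφinj).mpr hc)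
  have hwalk : ∀ {x y : α} (_ : K.Walk x y) (hx : x ∈ S') (hy : y ∈ S'),
      H.Reachable ⟨x, hx⟩ ⟨y, hy⟩ := by
    intro x y w
    induction w with
    | nil => intro hx hy; exact Reachable.refl _
    | cons h w ih =>
      rename_i x' b y'
      intro hx hy
      have hb : b ∈ S' := mem_esupp ((fromEdgeSet_adj _).mp h).1 (Sym2.mem_mk_right x' b)
      exact Reachable.trans (Adj.reachable (show H.Adj ⟨x', hx⟩ ⟨b, hb⟩ from h)) (ih hb hy)
  have hHconn : H.Connected := by
    rw [connected_iff]
    constructor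
    · rintro ⟨x, hx⟩ ⟨y, hy⟩
      obtain ⟨w⟩ := hconn x hx y hy
      exact hwalk w hx hy
    · obtain ⟨x, hx⟩ := esupp_nonempty hne
      exact ⟨⟨x, hx⟩⟩
  have hHtree : H.IsTree := ⟨hHconn, hHac⟩
  haveI : Fintype H.edgeSet := Fintype.ofFinite _
  have hcard := hHtree.card_edgeFinset
  -- identify F with the edge set of H
  have himg : Sym2.map (Subtype.val : ↥S' → α) '' H.edgeSet = F := by
    ext e
    constructor
    · rintro ⟨e', he', rfl⟩
      induction e' using Sym2.ind with
      | _ u v =>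
        rw [SimpleGraph.mem_edgeSet] at he'
        exact (hadj he').2
    · intro he
      induction e using Sym2.ind with
      | _ p q =>
        have hp : p ∈ S' := mem_esupp he (Sym2.mem_mk_left p q)
        have hq : q ∈ S' := mem_esupp he (Sym2.mem_mk_right p q)
        have hpq : p ≠ q := by
          intro h
          exact (hT.2 _ (hFE he)).1 (by rw [Sym2.mk_isDiag_iff]; exact h)
        refine ⟨s(⟨p, hp⟩, ⟨q, hq⟩), ?_, rfl⟩
        rw [SimpleGraph.mem_edgeSet]
        refine (fromEdgeSet_adj _).mpr ⟨he, fun h => hpq ?_⟩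
        exact h
  have hF : F.ncard = H.edgeFinset.card := by
    rw [← himg, ncard_image_of_injective _ (Sym2.map.injective Subtype.val_injective)]
    rw [edgeFinset, Set.ncard_eq_toFinset_card']
  have hScard : S'.ncard = Fintype.card ↥S' := by
    rw [← Nat.card_coe_set_eq, Nat.card_eq_fintype_card]
  rw [hScard, ← hcard, hF]

lemma cu_zero {d : ℕ} (v : VineNode d 0) : completeUnion d 0 v = {v} := rfl

lemma cu_succ {d k : ℕ} (e : VineNode d (k + 1)) :
    completeUnion d (k + 1) e
      = {i | ∃ a, a ∈ (e : Sym2 (VineNode d k)) ∧ i ∈ completeUnion d k a} := rfl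

/-- The set of nodes of tree `T_{j+1}` of the vine. -/
def vnodes (d : ℕ) (V : RegularVine d) : ∀ j : ℕ, Set (VineNode d j)
  | 0 => Set.univ
  | j + 1 => V.edges j

/-- Connectivity (via chains of pairs) of a set of level-`j` vine nodes. -/
def vconn (d : ℕ) : ∀ j : ℕ, Set (VineNode d j) → Prop
  | 0, _ => True
  | _ + 1, F => ∀ x ∈ esupp F, ∀ y ∈ esupp F, (SimpleGraph.fromEdgeSet F).Reachable x y

lemma vine_level_le {d : ℕ} (V : RegularVine d) {j : ℕ} (h : (V.edges j).Nonempty) :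
    j + 1 ≤ d - 1 := by
  by_contra h'
  rw [V.edges_top j (by omega)] at h
  exact Set.not_nonempty_empty h

lemma vine_isTreeOn {d : ℕ} (V : RegularVine d) {j : ℕ} (hj : j + 1 ≤ d - 1) :
    IsTreeOn (vnodes d V j) (V.edges j) := by
  cases j with
  | zero => exact V.tree_zero
  | succ m => exact V.tree_succ m hj

lemma vine_nondiag {d : ℕ} (V : RegularVine d) {j : ℕ} {u : Sym2 (VineNode d j)}
    (hu : u ∈ V.edges j) : ¬ u.IsDiag ∧ ∀ x ∈ u, x ∈ vnodes d V j :=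
  (vine_isTreeOn V (vine_level_le V ⟨u, hu⟩)).2 u hu

/-- Connectivity propagates down one level. -/
lemma vconn_esupp {d : ℕ} (V : RegularVine d) {m : ℕ} {F : Set (VineNode d (m + 1))}
    (hF : F ⊆ V.edges m) (hc : vconn d (m + 1) F) : vconn d m (esupp F) := by
  cases m with
  | zero => trivial
  | succ n =>
    -- elements of `esupp F` are edges of `T_{n+1}`
    have hmem : ∀ u ∈ esupp F, u ∈ V.edges n := by
      rintro u ⟨e, he, hu⟩
      exact (vine_nondiag V (hF he)).2 u hu
    have hA : ∀ u ∈ esupp F, ∀ p q : VineNode d n, p ∈ (u : Sym2 (VineNode d n)) → q ∈ u →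
        (SimpleGraph.fromEdgeSet (esupp F)).Reachable p q := by
      intro u hu p q hp hq
      exact reach_within (vine_nondiag V (hmem u hu)).1 hu hp hq
    have hB : ∀ (u v : VineNode d (n + 1)) (_ : (SimpleGraph.fromEdgeSet F).Walk u v),
        u ∈ esupp F → v ∈ esupp F → ∀ p q : VineNode d n,
        p ∈ (u : Sym2 (VineNode d n)) → q ∈ (v : Sym2 (VineNode d n)) →
        (SimpleGraph.fromEdgeSet (esupp F)).Reachable p q := by
      intro u v w
      induction w with
      | nil =>
        intro hu _ p q hp hq
        exact hA _ hu p q hp hq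
      | cons h w ih =>
        rename_i u' b v'
        intro hu hv p q hp hq
        have hub : s(u', b) ∈ F := ((fromEdgeSet_adj _).mp h).1
        have hne : u' ≠ b := ((fromEdgeSet_adj _).mp h).2
        have hb : b ∈ esupp F := mem_esupp hub (Sym2.mem_mk_right u' b)
        obtain ⟨x, y, z, hxy, hxz, hyz, hu', hb'⟩ := V.prox n (s(u', b)) (hF hub) u' b rfl hne
        have hz_u : z ∈ (u' : Sym2 (VineNode d n)) := by rw [hu']; simp
        have hz_b : z ∈ (b : Sym2 (VineNode d n)) := by rw [hb']; simp
        exact (hA u' hu p z hp hz_u).trans (ih hb hv z q hz_b hq)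
    rintro p ⟨u, hu, hp⟩ q ⟨v, hv, hq⟩
    obtain ⟨w⟩ := hc u hu v hv
    exact hB u v w hu hv p q hp hq

/-- Main counting lemma: a connected nonempty finite set `F` of level-`j` nodes
has `⋃ v ∈ F, A_v` of cardinality `F.ncard + j`. -/
lemma vine_main {d : ℕ} (V : RegularVine d) :
    ∀ (j : ℕ) (F : Set (VineNode d j)), F.Finite → F.Nonempty → F ⊆ vnodes d V j →
      vconn d j F → (⋃ v ∈ F, completeUnion d j v).ncard = F.ncard + j := by
  intro j
  induction j with
  | zero =>
    intro F _ _ _ _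
    have : ⋃ v ∈ F, completeUnion d 0 v = F := by
      ext x; simp [cu_zero]
    rw [this]
    omega
  | succ m ih =>
    intro F hfin hne hsub hconn
    have hle : m + 1 ≤ d - 1 := by
      obtain ⟨v, hv⟩ := hne
      exact vine_level_le V ⟨v, hsub hv⟩
    have hT := vine_isTreeOn V hle
    have hcount := count_lemma hT hsub hfin hne hconn
    have hsupp_sub : esupp F ⊆ vnodes d V m := by
      rintro x ⟨e, he, hx⟩
      exact (hT.2 e (hsub he)).2 x hx
    have hset : (⋃ v ∈ F, completeUnion d (m + 1) v) = ⋃ w ∈ esupp F, completeUnion d m w := by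
      ext i
      simp only [Set.mem_iUnion, exists_prop]
      constructor
      · rintro ⟨v, hv, hi⟩
        rw [cu_succ] at hi
        obtain ⟨a, ha, hia⟩ := hi
        exact ⟨a, ⟨v, hv, ha⟩, hia⟩
      · rintro ⟨w, ⟨e, he, hw⟩, hi⟩
        exact ⟨e, he, by rw [cu_succ]; exact ⟨w, hw, hi⟩⟩
    rw [hset, ih (esupp F) (esupp_finite hfin) (esupp_nonempty hne) hsupp_sub
      (vconn_esupp V hsub hconn), hcount]
    omega


/-- In a regular vine on `d` elements, for every edge `e = {a,b}` of a tree of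
the vine (here `e ∈ edges k`, i.e. an edge of tree `T_{k+1}`), the conditioned
sets `i(e) = A_a \ D(e)` and `j(e) = A_b \ D(e)` are singletons, the conditioning
set `D(e) = A_a ∩ A_b` has cardinality `(k+1) − 1 = k`, and the complete union
`A_e` has cardinality `(k+1) + 1 = k + 2`. -/
theorem conditioned_sets_are_singletons (d : ℕ) (V : RegularVine d) (k : ℕ)
    (e : Sym2 (VineNode d k)) (he : e ∈ V.edges k) (a b : VineNode d k)
    (hab : e = s(a, b)) :
    (completeUnion d k a \ (completeUnion d k a ∩ completeUnion d k b)).ncard = 1 ∧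
    (completeUnion d k b \ (completeUnion d k a ∩ completeUnion d k b)).ncard = 1 ∧
    (completeUnion d k a ∩ completeUnion d k b).ncard = k ∧
    (completeUnion d (k + 1) e).ncard = k + 2 := by
  classical
  subst hab
  have hle := vine_level_le V ⟨_, he⟩
  have hT := vine_isTreeOn V hle
  have hnd : ¬ (s(a, b)).IsDiag := (hT.2 _ he).1
  have hab : a ≠ b := by
    intro h
    exact hnd (by rw [Sym2.mk_isDiag_iff]; exact h)
  have ha : a ∈ vnodes d V k := (hT.2 _ he).2 a (Sym2.mem_mk_left a b)
  have hb : b ∈ vnodes d V k := (hT.2 _ he).2 b (Sym2.mem_mk_right a b)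
  -- connectivity of the relevant node sets
  have hconn_single : ∀ u : VineNode d k, u ∈ vnodes d V k → vconn d k ({u} : Set _) := by
    intro u hu
    cases k with
    | zero => trivial
    | succ m =>
      rintro p ⟨u', hu', hp⟩ q ⟨v', hv', hq⟩
      rw [Set.mem_singleton_iff] at hu' hv'
      subst hu'; subst hv'
      exact reach_within (vine_nondiag V hu).1 (Set.mem_singleton _) hp hq
  have hconn_pair : vconn d k ({a, b} : Set _) := by
    cases k with
    | zero => trivial
    | succ m =>
      obtain ⟨x, y, z, hxy, hxz, hyz, ha', hb'⟩ := V.prox m _ he a b rfl hab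
      have hz_a : z ∈ (a : Sym2 (VineNode d m)) := by rw [ha']; simp
      have hz_b : z ∈ (b : Sym2 (VineNode d m)) := by rw [hb']; simp
      have step : ∀ u ∈ ({a, b} : Set (VineNode d (m+1))), ∀ p : VineNode d m,
          p ∈ (u : Sym2 (VineNode d m)) →
          (SimpleGraph.fromEdgeSet ({a, b} : Set (VineNode d (m+1)))).Reachable p z := by
        rintro u hu p hp
        rcases hu with rfl | hu
        · exact reach_within (vine_nondiag V ha).1 (Set.mem_insert _ _) hp hz_a
        · rw [Set.mem_singleton_iff] at hu
          subst hu
          exact reach_within (vine_nondiag V hb).1 (Set.mem_insert_of_mem _ (Set.mem_singleton _)) hp hz_b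
      rintro p ⟨u, hu, hp⟩ q ⟨v, hv, hq⟩
      exact (step u hu p hp).trans (step v hv q hq).symm
  -- cardinalities via the main lemma
  have hAa : (completeUnion d k a).ncard = 1 + k := by
    have := vine_main V k {a} (Set.finite_singleton a) ⟨a, rfl⟩
      (by simpa using ha) (hconn_single a ha)
    simpa [Set.ncard_singleton] using this
  have hAb : (completeUnion d k b).ncard = 1 + k := by
    have := vine_main V k {b} (Set.finite_singleton b) ⟨b, rfl⟩
      (by simpa using hb) (hconn_single b hb)
    simpa [Set.ncard_singleton] using this
  have hAab : (completeUnion d k a ∪ completeUnion d k b).ncard = 2 + k := by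
    have := vine_main V k {a, b} (Set.toFinite _) ⟨a, Set.mem_insert _ _⟩
      (by rintro x (rfl | hx); · exact ha
          · rw [Set.mem_singleton_iff] at hx; subst hx; exact hb) hconn_pair
    rw [Set.biUnion_pair, Set.ncard_pair hab] at this
    exact this
  have hAe : completeUnion d (k + 1) (s(a, b)) =
      completeUnion d k a ∪ completeUnion d k b := by
    ext i
    rw [cu_succ]
    constructor
    · rintro ⟨x, hx, hi⟩
      rw [Sym2.mem_iff] at hx
      rcases hx with rfl | rfl
      · exact Or.inl hi
      · exact Or.inr hi
    · rintro (hi | hi)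
      · exact ⟨a, Sym2.mem_mk_left a b, hi⟩
      · exact ⟨b, Sym2.mem_mk_right a b, hi⟩
  -- arithmetic
  have hfinA : (completeUnion d k a).Finite := Set.toFinite _
  have hfinB : (completeUnion d k b).Finite := Set.toFinite _
  have hIU := Set.ncard_inter_add_ncard_union (completeUnion d k a) (completeUnion d k b)
    hfinA hfinB
  have hDa := Set.ncard_diff_add_ncard (completeUnion d k a) (completeUnion d k b) hfinA hfinB
  have hDb := Set.ncard_diff_add_ncard (completeUnion d k b) (completeUnion d k a) hfinB hfinA
  rw [Set.union_comm] at hDb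
  have h1 : completeUnion d k a \ (completeUnion d k a ∩ completeUnion d k b)
      = completeUnion d k a \ completeUnion d k b := Set.diff_self_inter
  have h2 : completeUnion d k b \ (completeUnion d k a ∩ completeUnion d k b)
      = completeUnion d k b \ completeUnion d k a := by
    rw [Set.inter_comm]; exact Set.diff_self_inter
  rw [h1, h2, hAe]
  omega
end

section
/- Let c₂ and c₃ be bivariate copula densities and let C_{2|1}(u₂|u₁) = ∫₀^{u₂} c₂(u₁,t) dt. Then the three-dimensional pair copula construction density c(u₁,u₂,u₃) = c₂(u₁,u₂) · c₃(u₁,u₃) · c₂₃(C_{2|1}(u₂|u₁), C_{3|1}(u₃|u₁)), where c₂₃ is any bivariate copula density, is a valid probability density on [0,1]³ with uniform margins. -/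
open MeasureTheory

/-- A bivariate copula density: a nonnegative measurable function on `[0,1]²`
both of whose partial integrals are identically `1`. -/
def IsCopulaDensity (c : ℝ → ℝ → ℝ) : Prop :=
  Measurable (Function.uncurry c) ∧ (∀ u v : ℝ, 0 ≤ c u v) ∧
  (∀ u ∈ Set.Icc (0:ℝ) 1, (∫ v in (0:ℝ)..1, c u v) = 1) ∧
  (∀ v ∈ Set.Icc (0:ℝ) 1, (∫ u in (0:ℝ)..1, c u v) = 1)

open Set
open scoped ENNReal

namespace PCC
variable {c : ℝ → ℝ → ℝ}

lemma meas_right (hc : IsCopulaDensity c) (u : ℝ) : Measurable (c u) := by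
  have := hc.1.comp (measurable_const.prodMk measurable_id : Measurable fun v : ℝ => (u, v))
  exact this

lemma meas_left (hc : IsCopulaDensity c) (v : ℝ) : Measurable (fun u => c u v) := by
  have := hc.1.comp ((measurable_id.prodMk measurable_const) : Measurable fun u : ℝ => (u, v))
  exact this

lemma intOn (hc : IsCopulaDensity c) {u : ℝ} (hu : u ∈ Icc (0:ℝ) 1) :
    IntegrableOn (c u) (Ioc 0 1) := by
  by_contra h
  have h1 := hc.2.2.1 u hu
  rw [intervalIntegral.integral_of_le zero_le_one, integral_undef h] at h1
  norm_num at h1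

lemma intOn' (hc : IsCopulaDensity c) {v : ℝ} (hv : v ∈ Icc (0:ℝ) 1) :
    IntegrableOn (fun u => c u v) (Ioc 0 1) := by
  by_contra h
  have h1 := hc.2.2.2 v hv
  rw [intervalIntegral.integral_of_le zero_le_one, integral_undef h] at h1
  norm_num at h1

lemma lint_margin1 (hc : IsCopulaDensity c) {u : ℝ} (hu : u ∈ Icc (0:ℝ) 1) :
    ∫⁻ v in Ioc (0:ℝ) 1, ENNReal.ofReal (c u v) = 1 := by
  rw [← ofReal_integral_eq_lintegral_ofReal (intOn hc hu)
      (Filter.Eventually.of_forall fun v => hc.2.1 u v)]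
  rw [← intervalIntegral.integral_of_le zero_le_one, hc.2.2.1 u hu, ENNReal.ofReal_one]

lemma lint_margin2 (hc : IsCopulaDensity c) {v : ℝ} (hv : v ∈ Icc (0:ℝ) 1) :
    ∫⁻ u in Ioc (0:ℝ) 1, ENNReal.ofReal (c u v) = 1 := by
  rw [← ofReal_integral_eq_lintegral_ofReal (intOn' hc hv)
      (Filter.Eventually.of_forall fun u => hc.2.1 u v)]
  rw [← intervalIntegral.integral_of_le zero_le_one, hc.2.2.2 v hv, ENNReal.ofReal_one]

/-- conditional cdf -/
noncomputable def S (c : ℝ → ℝ → ℝ) (u x : ℝ) : ℝ := ∫ t in (0:ℝ)..x, c u t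

lemma intOn_sub (hc : IsCopulaDensity c) {u : ℝ} (hu : u ∈ Icc (0:ℝ) 1) {t : ℝ}
    (ht : t ∈ Icc (0:ℝ) 1) : IntegrableOn (c u) (Ioc 0 t) :=
  (intOn hc hu).mono_set (Ioc_subset_Ioc le_rfl ht.2)

lemma S_eq (hc : IsCopulaDensity c) {u : ℝ} (ht : (0:ℝ) ≤ t) :
    S c u t = ∫ x in Ioc (0:ℝ) t, c u x := intervalIntegral.integral_of_le ht

lemma ofReal_S (hc : IsCopulaDensity c) {u : ℝ} (hu : u ∈ Icc (0:ℝ) 1) {t : ℝ}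
    (ht : t ∈ Icc (0:ℝ) 1) :
    ENNReal.ofReal (S c u t) = ∫⁻ x in Ioc (0:ℝ) t, ENNReal.ofReal (c u x) := by
  rw [S_eq hc ht.1, ofReal_integral_eq_lintegral_ofReal (intOn_sub hc hu ht)
      (Filter.Eventually.of_forall fun v => hc.2.1 u v)]

lemma S_nonneg (hc : IsCopulaDensity c) (u : ℝ) {t : ℝ} (ht : (0:ℝ) ≤ t) : 0 ≤ S c u t := by
  rw [S_eq hc ht]
  exact setIntegral_nonneg measurableSet_Ioc fun x _ => hc.2.1 u x

lemma S_monoOn (hc : IsCopulaDensity c) {u : ℝ} (hu : u ∈ Icc (0:ℝ) 1) :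
    MonotoneOn (S c u) (Icc 0 1) := by
  intro x hx y hy hxy
  rw [S_eq hc hx.1, S_eq hc hy.1]
  exact setIntegral_mono_set (intOn_sub hc hu hy)
    (Filter.Eventually.of_forall fun v => hc.2.1 u v)
    (Filter.Eventually.of_forall (Ioc_subset_Ioc le_rfl hxy))

lemma S_zero (u : ℝ) : S c u 0 = 0 := intervalIntegral.integral_same

lemma S_one (hc : IsCopulaDensity c) {u : ℝ} (hu : u ∈ Icc (0:ℝ) 1) : S c u 1 = 1 :=
  hc.2.2.1 u hu

lemma S_le_one (hc : IsCopulaDensity c) {u : ℝ} (hu : u ∈ Icc (0:ℝ) 1) {t : ℝ}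
    (ht : t ∈ Icc (0:ℝ) 1) : S c u t ≤ 1 := by
  rw [← S_one hc hu]
  exact S_monoOn hc hu ht (by norm_num) ht.2

lemma S_mem (hc : IsCopulaDensity c) {u : ℝ} (hu : u ∈ Icc (0:ℝ) 1) {t : ℝ}
    (ht : t ∈ Icc (0:ℝ) 1) : S c u t ∈ Icc (0:ℝ) 1 :=
  ⟨S_nonneg hc u ht.1, S_le_one hc hu ht⟩

lemma S_contOn (hc : IsCopulaDensity c) {u : ℝ} (hu : u ∈ Icc (0:ℝ) 1) :
    ContinuousOn (S c u) (Icc 0 1) := by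
  have h : IntegrableOn (c u) (uIcc (0:ℝ) 1) := by
    rw [uIcc_of_le zero_le_one, integrableOn_Icc_iff_integrableOn_Ioc]
    exact intOn hc hu
  have := intervalIntegral.continuousOn_primitive_interval (a := (0:ℝ)) (b := 1) h
  rwa [uIcc_of_le zero_le_one] at this


noncomputable def proj (x : ℝ) : ℝ := max 0 (min x 1)

lemma proj_mem (x : ℝ) : proj x ∈ Icc (0:ℝ) 1 :=
  ⟨le_max_left _ _, max_le (by norm_num) (min_le_right _ _)⟩

lemma proj_eq {x : ℝ} (hx : x ∈ Icc (0:ℝ) 1) : proj x = x := by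
  unfold proj; rw [min_eq_left hx.2, max_eq_right hx.1]

lemma continuous_proj : Continuous proj :=
  continuous_const.max (continuous_id.min continuous_const)

/-- clamped conditional cdf, continuous on all of ℝ -/
noncomputable def Sc (c : ℝ → ℝ → ℝ) (u : ℝ) : ℝ → ℝ := fun x => S c u (proj x)

lemma continuous_Sc (hc : IsCopulaDensity c) {u : ℝ} (hu : u ∈ Icc (0:ℝ) 1) :
    Continuous (Sc c u) :=
  (S_contOn hc hu).comp_continuous continuous_proj proj_mem

lemma Sc_eq {u x : ℝ} (hx : x ∈ Icc (0:ℝ) 1) : Sc c u x = S c u x := by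
  unfold Sc; rw [proj_eq hx]

/-- pushforward of the density measure by the cdf is Lebesgue -/
lemma map_S (hc : IsCopulaDensity c) {u : ℝ} (hu : u ∈ Icc (0:ℝ) 1) {t : ℝ}
    (ht : t ∈ Icc (0:ℝ) 1) :
    Measure.map (Sc c u)
      ((volume.restrict (Ioc 0 t)).withDensity (fun x => ENNReal.ofReal (c u x)))
      = volume.restrict (Ioc 0 (S c u t)) := by
  set μ : Measure ℝ :=
    (volume.restrict (Ioc 0 t)).withDensity (fun x => ENNReal.ofReal (c u x)) with hμ
  have hmeas : Measurable (Sc c u) := (continuous_Sc hc hu).measurable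
  have hμs : ∀ s : Set ℝ, MeasurableSet s →
      μ s = ∫⁻ x in s ∩ Ioc 0 t, ENNReal.ofReal (c u x) := by
    intro s hs
    rw [hμ, withDensity_apply _ hs, Measure.restrict_restrict hs]
  have hfin : IsFiniteMeasure μ := by
    constructor
    rw [hμs univ MeasurableSet.univ, univ_inter, ← ofReal_S hc hu ht]
    exact ENNReal.ofReal_lt_top
  have hfin2 : IsFiniteMeasure (Measure.map (Sc c u) μ) := by
    constructor
    rw [Measure.map_apply hmeas MeasurableSet.univ, preimage_univ]
    exact hfin.measure_univ_lt_top
  refine Measure.ext_of_Iic _ _ (fun a => ?_)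
  rw [Measure.map_apply hmeas measurableSet_Iic,
    hμs _ (hmeas measurableSet_Iic)]
  rw [Measure.restrict_apply measurableSet_Iic]
  by_cases ha : 0 ≤ a
  · -- define x₀
    set E : Set ℝ := {x ∈ Icc 0 t | S c u x ≤ a} with hE
    have hEne : E.Nonempty := ⟨0, ⟨le_rfl, ht.1⟩, by rw [S_zero]; exact ha⟩
    have hEbdd : BddAbove E := ⟨t, fun x hx => hx.1.2⟩
    set x₀ := sSup E with hx₀
    have hIccsub : Icc (0:ℝ) t ⊆ Icc 0 1 := Icc_subset_Icc le_rfl ht.2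
    have hEclosed : IsClosed E := by
      have : E = Icc 0 t ∩ S c u ⁻¹' Iic a := by
        ext x; simp [hE, and_comm]
      rw [this]
      exact ContinuousOn.preimage_isClosed_of_isClosed
        ((S_contOn hc hu).mono hIccsub) isClosed_Icc isClosed_Iic
    have hx₀E : x₀ ∈ E := hEclosed.csSup_mem hEne hEbdd
    have hx₀Icc : x₀ ∈ Icc (0:ℝ) t := hx₀E.1
    have hset : (Sc c u ⁻¹' Iic a) ∩ Ioc 0 t = Ioc 0 x₀ := by
      ext x
      simp only [mem_inter_iff, mem_preimage, mem_Iic, mem_Ioc]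
      constructor
      · rintro ⟨hSx, hx1, hx2⟩
        refine ⟨hx1, le_csSup hEbdd ?_⟩
        exact ⟨⟨hx1.le, hx2⟩, by rwa [Sc_eq ⟨hx1.le, hx2.trans ht.2⟩] at hSx⟩
      · rintro ⟨hx1, hx2⟩
        have hxt : x ≤ t := hx2.trans hx₀Icc.2
        refine ⟨?_, hx1, hxt⟩
        rw [Sc_eq ⟨hx1.le, hxt.trans ht.2⟩]
        calc S c u x ≤ S c u x₀ :=
              S_monoOn hc hu ⟨hx1.le, hxt.trans ht.2⟩ (hIccsub hx₀Icc) hx2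
          _ ≤ a := hx₀E.2
    rw [hset, ← ofReal_S hc hu ⟨hx₀Icc.1, hx₀Icc.2.trans ht.2⟩]
    -- RHS : volume (Iic a ∩ Ioc 0 (S c u t))
    have hrhs : Ioc 0 (S c u t) ∩ Iic a = Ioc 0 (min a (S c u t)) := by
      ext x; simp only [mem_inter_iff, mem_Iic, mem_Ioc, lt_min_iff, le_min_iff]
      constructor
      · rintro ⟨⟨h2, h3⟩, h1⟩; exact ⟨h2, h1, h3⟩
      · rintro ⟨h1, h2, h3⟩; exact ⟨⟨h1, h3⟩, h2⟩
    rw [inter_comm (Iic a), hrhs, Real.volume_Ioc, tsub_zero]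
    -- show S c u x₀ = min a (S c u t)
    congr 1
    rcases le_or_gt (S c u t) a with hta | hta
    · have hx₀t : x₀ = t := le_antisymm hx₀Icc.2 (le_csSup hEbdd ⟨⟨ht.1, le_rfl⟩, hta⟩)
      rw [hx₀t, min_eq_right hta]
    · rw [min_eq_left hta.le]
      have hSx₀ : S c u x₀ ≤ a := hx₀E.2
      rcases lt_or_eq_of_le hSx₀ with hlt | heq
      · exfalso
        have hx₀lt : x₀ < t := by
          rcases lt_or_eq_of_le hx₀Icc.2 with h | h
          · exact h
          · exfalso; rw [h] at hlt; exact absurd hta (not_lt.2 hlt.le)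
        -- continuity: points slightly right of x₀ still have S < a
        have hcw : ContinuousWithinAt (S c u) (Icc 0 t) x₀ :=
          ((S_contOn hc hu).mono hIccsub) x₀ hx₀Icc
        have hev : ∀ᶠ x in nhdsWithin x₀ (Icc 0 t), S c u x < a :=
          hcw.eventually_lt continuousWithinAt_const hlt
        have hne : (nhdsWithin x₀ (Ioc x₀ t)).NeBot := left_nhdsWithin_Ioc_neBot hx₀lt
        have hle : nhdsWithin x₀ (Ioc x₀ t) ≤ nhdsWithin x₀ (Icc 0 t) :=
          nhdsWithin_mono _ (fun x hx => ⟨hx₀Icc.1.trans hx.1.le, hx.2⟩)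
        have hev2 : ∀ᶠ x in nhdsWithin x₀ (Ioc x₀ t), S c u x < a ∧ x ∈ Ioc x₀ t :=
          (hev.filter_mono hle).and eventually_mem_nhdsWithin
        obtain ⟨x', hx'⟩ := hev2.exists
        have : x' ≤ x₀ := le_csSup hEbdd ⟨⟨hx₀Icc.1.trans hx'.2.1.le, hx'.2.2⟩, hx'.1.le⟩
        exact absurd hx'.2.1 (not_lt.2 this)
      · exact heq
  · -- a < 0 : both sides zero
    push_neg at ha
    have h1 : (Sc c u ⁻¹' Iic a) ∩ Ioc 0 t = ∅ := by
      ext x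
      simp only [mem_inter_iff, mem_preimage, mem_Iic, mem_Ioc, mem_empty_iff_false,
        iff_false, not_and]
      intro hSx hx1 hx2
      have : 0 ≤ Sc c u x := by
        rw [Sc_eq ⟨hx1.le, hx2.trans ht.2⟩]; exact S_nonneg hc u hx1.le
      linarith
    have h2 : Ioc 0 (S c u t) ∩ Iic a = ∅ := by
      ext x
      simp only [mem_inter_iff, mem_Iic, mem_Ioc, mem_empty_iff_false, iff_false, not_and]
      rintro ⟨hx1, hx2⟩ h; linarith
    rw [h1, inter_comm (Iic a), h2]
    simp


lemma S_def (c : ℝ → ℝ → ℝ) (u x : ℝ) : S c u x = ∫ t in (0:ℝ)..x, c u t := rfl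

lemma transform (hc : IsCopulaDensity c) {u : ℝ} (hu : u ∈ Icc (0:ℝ) 1) {t : ℝ}
    (ht : t ∈ Icc (0:ℝ) 1) {g : ℝ → ℝ≥0∞} (hg : Measurable g) :
    ∫⁻ x in Ioc (0:ℝ) t, ENNReal.ofReal (c u x) * g (Sc c u x)
      = ∫⁻ v in Ioc (0:ℝ) (S c u t), g v := by
  have hmeas : Measurable (Sc c u) := (continuous_Sc hc hu).measurable
  have hcm : Measurable fun x => ENNReal.ofReal (c u x) := (meas_right hc u).ennreal_ofReal
  calc ∫⁻ x in Ioc (0:ℝ) t, ENNReal.ofReal (c u x) * g (Sc c u x)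
      = ∫⁻ x, g (Sc c u x)
          ∂((volume.restrict (Ioc 0 t)).withDensity fun x => ENNReal.ofReal (c u x)) := by
        rw [lintegral_withDensity_eq_lintegral_mul _ hcm
          (show Measurable fun x => g (Sc c u x) from hg.comp hmeas)]
        rfl
    _ = ∫⁻ v, g v ∂(Measure.map (Sc c u)
          ((volume.restrict (Ioc 0 t)).withDensity fun x => ENNReal.ofReal (c u x))) :=
        (lintegral_map hg hmeas).symm
    _ = ∫⁻ v in Ioc (0:ℝ) (S c u t), g v := by rw [map_S hc hu ht]

/-- the key inner-integral identity coming from the probability integral transform -/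
lemma inner3 (hc : IsCopulaDensity c) (hb : IsCopulaDensity b) {u : ℝ}
    (hu : u ∈ Icc (0:ℝ) 1) {s : ℝ} (hs : s ∈ Icc (0:ℝ) 1) (w₀ : ℝ) :
    ∫ x in (0:ℝ)..s, c u x * b w₀ (S c u x)
      = (∫⁻ v in Ioc (0:ℝ) (S c u s), ENNReal.ofReal (b w₀ v)).toReal := by
  rw [intervalIntegral.integral_of_le hs.1]
  have hIoc : Ioc (0:ℝ) s ⊆ Icc 0 1 := fun x hx => ⟨hx.1.le, hx.2.trans hs.2⟩
  have hcongr : ∀ x ∈ Ioc (0:ℝ) s, c u x * b w₀ (S c u x) = c u x * b w₀ (Sc c u x) := by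
    intro x hx; rw [Sc_eq (hIoc hx)]
  rw [setIntegral_congr_fun measurableSet_Ioc hcongr]
  have hg : Measurable fun v => ENNReal.ofReal (b w₀ v) := (meas_right hb w₀).ennreal_ofReal
  have hm : Measurable fun x => c u x * b w₀ (Sc c u x) :=
    (meas_right hc u).mul ((meas_right hb w₀).comp (continuous_Sc hc hu).measurable)
  rw [integral_eq_lintegral_of_nonneg_ae
      (Filter.Eventually.of_forall fun x => mul_nonneg (hc.2.1 u x) (hb.2.1 w₀ _))
      hm.aestronglyMeasurable]
  congr 1
  rw [← transform hc hu hs hg]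
  refine setLIntegral_congr_fun measurableSet_Ioc ?_
  intro x _
  exact ENNReal.ofReal_mul (hc.2.1 u x)

/-- Fubini-type lemma: outer integral of inner cdf-slices equals `s`. -/
lemma lemE (hc : IsCopulaDensity c) {s : ℝ} (hs : s ∈ Icc (0:ℝ) 1) :
    ∫ u in Ioc (0:ℝ) 1, (∫ v in (0:ℝ)..s, c u v) = s := by
  set L : ℝ → ℝ≥0∞ := fun u => ∫⁻ v in Ioc (0:ℝ) s, ENNReal.ofReal (c u v) with hL
  have hLm : Measurable L := Measurable.lintegral_prod_right hc.1.ennreal_ofReal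
  have hLle : ∀ u ∈ Icc (0:ℝ) 1, L u ≤ 1 := by
    intro u hu
    rw [← lint_margin1 hc hu]
    exact lintegral_mono_set (Ioc_subset_Ioc le_rfl hs.2)
  have hkey : ∀ u ∈ Ioc (0:ℝ) 1, (∫ v in (0:ℝ)..s, c u v) = (L u).toReal := by
    intro u hu
    have hu' : u ∈ Icc (0:ℝ) 1 := ⟨hu.1.le, hu.2⟩
    have h1 : ENNReal.ofReal (S c u s) = L u := ofReal_S hc hu' hs
    rw [← S_def, ← ENNReal.toReal_ofReal (S_nonneg hc u hs.1), h1]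
  rw [setIntegral_congr_fun measurableSet_Ioc hkey]
  have hae : ∀ᵐ u ∂(volume.restrict (Ioc (0:ℝ) 1)), L u < ⊤ := by
    refine (ae_restrict_iff' measurableSet_Ioc).2 (Filter.Eventually.of_forall ?_)
    intro u hu
    exact lt_of_le_of_lt (hLle u ⟨hu.1.le, hu.2⟩) ENNReal.one_lt_top
  rw [integral_toReal hLm.aemeasurable hae]
  have hswap : ∫⁻ u in Ioc (0:ℝ) 1, L u
      = ∫⁻ v in Ioc (0:ℝ) s, ∫⁻ u in Ioc (0:ℝ) 1, ENNReal.ofReal (c u v) := by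
    exact lintegral_lintegral_swap (hc.1.ennreal_ofReal.aemeasurable)
  rw [hswap]
  have : ∀ v ∈ Ioc (0:ℝ) s, (∫⁻ u in Ioc (0:ℝ) 1, ENNReal.ofReal (c u v)) = 1 := by
    intro v hv
    exact lint_margin2 hc ⟨hv.1.le, hv.2.trans hs.2⟩
  rw [setLIntegral_congr_fun measurableSet_Ioc this]
  simp [Real.volume_Ioc, ENNReal.toReal_ofReal hs.1]

variable {c b : ℝ → ℝ → ℝ}
variable {c₂ c₃ c₂₃ : ℝ → ℝ → ℝ}

lemma inner_u3_one (h₂ : IsCopulaDensity c₂) (h₃ : IsCopulaDensity c₃)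
    (h₂₃ : IsCopulaDensity c₂₃) {u₁ : ℝ} (hu₁ : u₁ ∈ Icc (0:ℝ) 1) {u₂ : ℝ}
    (hu₂ : u₂ ∈ Icc (0:ℝ) 1) :
    ∫ u₃ in (0:ℝ)..1, c₂ u₁ u₂ * c₃ u₁ u₃ * c₂₃ (S c₂ u₁ u₂) (S c₃ u₁ u₃) = c₂ u₁ u₂ := by
  simp only [mul_assoc]
  rw [intervalIntegral.integral_const_mul,
    inner3 h₃ h₂₃ hu₁ (by norm_num : (1:ℝ) ∈ Icc (0:ℝ) 1) (S c₂ u₁ u₂),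
    S_one h₃ hu₁, lint_margin1 h₂₃ (S_mem h₂ hu₁ hu₂)]
  simp

lemma P2 (h₂ : IsCopulaDensity c₂) (h₃ : IsCopulaDensity c₃)
    (h₂₃ : IsCopulaDensity c₂₃) {u₁ : ℝ} (hu₁ : u₁ ∈ Icc (0:ℝ) 1) {s : ℝ}
    (hs : s ∈ Icc (0:ℝ) 1) :
    (∫ u₂ in (0:ℝ)..s, ∫ u₃ in (0:ℝ)..1,
        c₂ u₁ u₂ * c₃ u₁ u₃ * c₂₃ (S c₂ u₁ u₂) (S c₃ u₁ u₃))
      = ∫ u₂ in (0:ℝ)..s, c₂ u₁ u₂ := by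
  rw [intervalIntegral.integral_of_le hs.1, intervalIntegral.integral_of_le hs.1]
  exact setIntegral_congr_fun measurableSet_Ioc
    (fun u₂ hu₂ => inner_u3_one h₂ h₃ h₂₃ hu₁ ⟨hu₂.1.le, hu₂.2.trans hs.2⟩)

lemma P1 (h₂ : IsCopulaDensity c₂) (h₃ : IsCopulaDensity c₃)
    (h₂₃ : IsCopulaDensity c₂₃) {u₁ : ℝ} (hu₁ : u₁ ∈ Icc (0:ℝ) 1) :
    (∫ u₂ in (0:ℝ)..1, ∫ u₃ in (0:ℝ)..1,
        c₂ u₁ u₂ * c₃ u₁ u₃ * c₂₃ (S c₂ u₁ u₂) (S c₃ u₁ u₃)) = 1 := by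
  rw [P2 h₂ h₃ h₂₃ hu₁ (by norm_num : (1:ℝ) ∈ Icc (0:ℝ) 1)]
  exact h₂.2.2.1 u₁ hu₁

lemma P3 (h₂ : IsCopulaDensity c₂) (h₃ : IsCopulaDensity c₃)
    (h₂₃ : IsCopulaDensity c₂₃) {u₁ : ℝ} (hu₁ : u₁ ∈ Icc (0:ℝ) 1) {s : ℝ}
    (hs : s ∈ Icc (0:ℝ) 1) :
    (∫ u₂ in (0:ℝ)..1, ∫ u₃ in (0:ℝ)..s,
        c₂ u₁ u₂ * c₃ u₁ u₃ * c₂₃ (S c₂ u₁ u₂) (S c₃ u₁ u₃))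
      = ∫ v in (0:ℝ)..s, c₃ u₁ v := by
  set X : ℝ := S c₃ u₁ s with hX
  set J : ℝ → ℝ≥0∞ := fun w₀ => ∫⁻ v in Ioc (0:ℝ) X, ENNReal.ofReal (c₂₃ w₀ v) with hJ
  have hJm : Measurable J := Measurable.lintegral_prod_right h₂₃.1.ennreal_ofReal
  have hXmem : X ∈ Icc (0:ℝ) 1 := S_mem h₃ hu₁ hs
  have hJle : ∀ w₀ ∈ Icc (0:ℝ) 1, J w₀ ≤ 1 := fun w₀ hw =>
    (lintegral_mono_set (Ioc_subset_Ioc le_rfl hXmem.2)).trans (lint_margin1 h₂₃ hw).le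
  have hinner : ∀ u₂ ∈ Icc (0:ℝ) 1,
      (∫ u₃ in (0:ℝ)..s, c₂ u₁ u₂ * c₃ u₁ u₃ * c₂₃ (S c₂ u₁ u₂) (S c₃ u₁ u₃))
        = c₂ u₁ u₂ * (J (S c₂ u₁ u₂)).toReal := by
    intro u₂ _
    simp only [mul_assoc]
    rw [intervalIntegral.integral_const_mul, inner3 h₃ h₂₃ hu₁ hs (S c₂ u₁ u₂)]
  rw [intervalIntegral.integral_of_le zero_le_one,
    setIntegral_congr_fun measurableSet_Ioc
      (fun u₂ hu₂ => hinner u₂ ⟨hu₂.1.le, hu₂.2⟩)]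
  have hcongr2 : ∀ u₂ ∈ Ioc (0:ℝ) 1, c₂ u₁ u₂ * (J (S c₂ u₁ u₂)).toReal
      = c₂ u₁ u₂ * (J (Sc c₂ u₁ u₂)).toReal := by
    intro u₂ hu₂; rw [Sc_eq ⟨hu₂.1.le, hu₂.2⟩]
  rw [setIntegral_congr_fun measurableSet_Ioc hcongr2]
  have hm : Measurable fun u₂ => c₂ u₁ u₂ * (J (Sc c₂ u₁ u₂)).toReal :=
    (meas_right h₂ u₁).mul ((hJm.comp (continuous_Sc h₂ hu₁).measurable).ennreal_toReal)
  rw [integral_eq_lintegral_of_nonneg_ae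
    (Filter.Eventually.of_forall fun u₂ => mul_nonneg (h₂.2.1 _ _) ENNReal.toReal_nonneg)
    hm.aestronglyMeasurable]
  have hpt : ∀ u₂ ∈ Ioc (0:ℝ) 1, ENNReal.ofReal (c₂ u₁ u₂ * (J (Sc c₂ u₁ u₂)).toReal)
      = ENNReal.ofReal (c₂ u₁ u₂) * J (Sc c₂ u₁ u₂) := by
    intro u₂ hu₂
    have h1 : Sc c₂ u₁ u₂ ∈ Icc (0:ℝ) 1 := by
      rw [Sc_eq ⟨hu₂.1.le, hu₂.2⟩]; exact S_mem h₂ hu₁ ⟨hu₂.1.le, hu₂.2⟩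
    rw [ENNReal.ofReal_mul (h₂.2.1 u₁ u₂), ENNReal.ofReal_toReal
      ((hJle _ h1).trans_lt ENNReal.one_lt_top).ne]
  rw [setLIntegral_congr_fun measurableSet_Ioc hpt,
    transform h₂ hu₁ (by norm_num : (1:ℝ) ∈ Icc (0:ℝ) 1) hJm, S_one h₂ hu₁]
  simp only [hJ]
  rw [lintegral_lintegral_swap h₂₃.1.ennreal_ofReal.aemeasurable]
  rw [setLIntegral_congr_fun measurableSet_Ioc
    (fun v hv => lint_margin2 h₂₃ ⟨hv.1.le, hv.2.trans hXmem.2⟩)]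
  rw [setLIntegral_one, Real.volume_Ioc, tsub_zero, ENNReal.toReal_ofReal hXmem.1, hX,
    S_def]

end PCC

/-- The three-dimensional pair copula construction
`c(u₁,u₂,u₃) = c₂(u₁,u₂) · c₃(u₁,u₃) · c₂₃(C_{2|1}(u₂|u₁), C_{3|1}(u₃|u₁))`,
with conditional CDFs `C_{2|1}(u₂|u₁) = ∫₀^{u₂} c₂(u₁,t) dt` and
`C_{3|1}(u₃|u₁) = ∫₀^{u₃} c₃(u₁,t) dt`, is a valid probability density on
`[0,1]³` (nonnegative, total integral `1`) with uniform univariate margins. -/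
theorem three_dim_pcc_is_density (c₂ c₃ c₂₃ : ℝ → ℝ → ℝ)
    (h₂ : IsCopulaDensity c₂) (h₃ : IsCopulaDensity c₃)
    (h₂₃ : IsCopulaDensity c₂₃)
    (f : ℝ → ℝ → ℝ → ℝ)
    (hf : ∀ u₁ u₂ u₃ : ℝ, f u₁ u₂ u₃ =
      c₂ u₁ u₂ * c₃ u₁ u₃ *
        c₂₃ (∫ t in (0:ℝ)..u₂, c₂ u₁ t) (∫ t in (0:ℝ)..u₃, c₃ u₁ t)) :
    (∀ u₁ u₂ u₃ : ℝ, 0 ≤ f u₁ u₂ u₃) ∧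
    (∫ u₁ in (0:ℝ)..1, ∫ u₂ in (0:ℝ)..1, ∫ u₃ in (0:ℝ)..1, f u₁ u₂ u₃) = 1 ∧
    (∀ t ∈ Set.Icc (0:ℝ) 1,
      (∫ u₁ in (0:ℝ)..t, ∫ u₂ in (0:ℝ)..1, ∫ u₃ in (0:ℝ)..1, f u₁ u₂ u₃) = t) ∧
    (∀ t ∈ Set.Icc (0:ℝ) 1,
      (∫ u₁ in (0:ℝ)..1, ∫ u₂ in (0:ℝ)..t, ∫ u₃ in (0:ℝ)..1, f u₁ u₂ u₃) = t) ∧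
    (∀ t ∈ Set.Icc (0:ℝ) 1,
      (∫ u₁ in (0:ℝ)..1, ∫ u₂ in (0:ℝ)..1, ∫ u₃ in (0:ℝ)..t, f u₁ u₂ u₃) = t) := by
  have hf' : ∀ u₁ u₂ u₃ : ℝ, f u₁ u₂ u₃ =
      c₂ u₁ u₂ * c₃ u₁ u₃ * c₂₃ (PCC.S c₂ u₁ u₂) (PCC.S c₃ u₁ u₃) := hf
  have hmargin1 : ∀ t ∈ Set.Icc (0:ℝ) 1,
      (∫ u₁ in (0:ℝ)..t, ∫ u₂ in (0:ℝ)..1, ∫ u₃ in (0:ℝ)..1, f u₁ u₂ u₃) = t := by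
    intro t ht
    simp only [hf']
    rw [intervalIntegral.integral_of_le ht.1,
      setIntegral_congr_fun measurableSet_Ioc
        (fun u₁ hu₁ => PCC.P1 h₂ h₃ h₂₃ ⟨hu₁.1.le, hu₁.2.trans ht.2⟩)]
    simp [Real.volume_Ioc, ht.1]
  refine ⟨?_, ?_, hmargin1, ?_, ?_⟩
  · intro u₁ u₂ u₃
    rw [hf]
    exact mul_nonneg (mul_nonneg (h₂.2.1 _ _) (h₃.2.1 _ _)) (h₂₃.2.1 _ _)
  · exact hmargin1 1 (by norm_num)
  · intro t ht
    simp only [hf']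
    rw [intervalIntegral.integral_of_le zero_le_one,
      setIntegral_congr_fun measurableSet_Ioc
        (fun u₁ hu₁ => PCC.P2 h₂ h₃ h₂₃ ⟨hu₁.1.le, hu₁.2⟩ ht),
      PCC.lemE h₂ ht]
  · intro t ht
    simp only [hf']
    rw [intervalIntegral.integral_of_le zero_le_one,
      setIntegral_congr_fun measurableSet_Ioc
        (fun u₁ hu₁ => PCC.P3 h₂ h₃ h₂₃ ⟨hu₁.1.le, hu₁.2⟩ ht),
      PCC.lemE h₃ ht]
end
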